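/- For all nonempty subsets X and Y of Λ*, the MacNeille closure operators commute with elementwise concatenation: (XY)^{∇Δ} = X^{∇Δ} Y^{∇Δ} and (XY)^{Δ∇} = X^{Δ∇} Y^{Δ∇}. -/
import Mathlib


/-- The Higman ordering on words over an ordered alphabet `Λ`:
`x ≤ y` iff `y` has a subword that is letterwise above `x`. -/
def HigmanLE {Λ : Type*} [PartialOrder Λ] (x y : List Λ) : Prop :=
  List.SublistForall₂ (· ≤ ·) x y

/-- The strict Higman ordering. -/
def HigmanLT {Λ : Type*} [PartialOrder Λ] (x y : List Λ) : Prop :=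
  HigmanLE x y ∧ ¬ HigmanLE y x

/-- The upper cone `X^Δ` of a set of words. -/
def upperCone {Λ : Type*} [PartialOrder Λ] (X : Set (List Λ)) : Set (List Λ) :=
  {y | ∀ x ∈ X, HigmanLE x y}

/-- The lower cone `X^∇` of a set of words. -/
def lowerCone {Λ : Type*} [PartialOrder Λ] (X : Set (List Λ)) : Set (List Λ) :=
  {y | ∀ x ∈ X, HigmanLE y x}

/-- Elementwise concatenation `XY` of two sets of words. -/
def concatSet {Λ : Type*} (X Y : Set (List Λ)) : Set (List Λ) :=
  {w | ∃ x ∈ X, ∃ y ∈ Y, w = x ++ y}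

/-- A (MacNeille) closed upper set of words: `Z = Z^{∇Δ}`. -/
def ClosedUpper {Λ : Type*} [PartialOrder Λ] (Z : Set (List Λ)) : Prop :=
  Z = upperCone (lowerCone Z)

/-- A (MacNeille) closed lower set of words: `W = W^{Δ∇}`. -/
def ClosedLower {Λ : Type*} [PartialOrder Λ] (W : Set (List Λ)) : Prop :=
  W = lowerCone (upperCone W)

/-- An upper set of words with respect to the Higman ordering. -/
def IsUpperWordSet {Λ : Type*} [PartialOrder Λ] (Z : Set (List Λ)) : Prop :=
  ∀ x y : List Λ, HigmanLE x y → x ∈ Z → y ∈ Z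

/-- A finitely generated lower set of words. -/
def FinGenLowerWords {Λ : Type*} [PartialOrder Λ] (S : Set (List Λ)) : Prop :=
  ∃ F : Finset (List Λ), S = {x | ∃ w ∈ F, HigmanLE x w}

/-- A finitely generated lower set of letters. -/
def FinGenLowerLetters {Λ : Type*} [PartialOrder Λ] (S : Set Λ) : Prop :=
  ∃ F : Finset Λ, S = {x | ∃ w ∈ F, x ≤ w}

/-- Well-foundedness: no infinite strictly decreasing sequence. -/
def NoInfiniteDescent {Λ : Type*} [PartialOrder Λ] : Prop :=
  ¬ ∃ f : ℕ → Λ, ∀ n, f (n + 1) < f n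

/-- Stability under the cancellation rule. -/
def StableCancel {Λ : Type*} [PartialOrder Λ] (Z : Set (List Λ)) : Prop :=
  ∀ (y z : List Λ) (α β : Λ), (¬ ∃ c, c ≤ α ∧ c ≤ β) →
    y ++ α :: z ∈ Z → y ++ β :: z ∈ Z → y ++ z ∈ Z

/-- Stability under the reduction rule. -/
def StableReduce {Λ : Type*} [PartialOrder Λ] (Z : Set (List Λ)) : Prop :=
  ∀ (y z : List Λ) (α γ : Λ), α < γ →
    y ++ α :: α :: z ∈ Z → y ++ γ :: z ∈ Z → y ++ α :: z ∈ Z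

/-- Stability under the permutation rule. -/
def StablePerm {Λ : Type*} [PartialOrder Λ] (Z : Set (List Λ)) : Prop :=
  ∀ (y z : List Λ) (α β γ : Λ), ¬ α ≤ β → ¬ β ≤ α → α < γ → β < γ →
    y ++ α :: β :: z ∈ Z → y ++ γ :: z ∈ Z → y ++ β :: α :: z ∈ Z

/-- Stability under the meet rule. -/
def StableMeet {Λ : Type*} [PartialOrder Λ] (Z : Set (List Λ)) : Prop :=
  ∀ (y z : List Λ) (α β m : Λ), ¬ α ≤ β → ¬ β ≤ α →
    IsGLB ({α, β} : Set Λ) m →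
    y ++ α :: z ∈ Z → y ++ β :: z ∈ Z → y ++ m :: z ∈ Z

/-- Stability under all four rules. -/
def StableAll {Λ : Type*} [PartialOrder Λ] (Z : Set (List Λ)) : Prop :=
  StableCancel Z ∧ StableReduce Z ∧ StablePerm Z ∧ StableMeet Z

/-- `[Y]`: the smallest upper set containing `Y` that is stable under the four rules. -/
def stableClosure {Λ : Type*} [PartialOrder Λ] (Y : Set (List Λ)) : Set (List Λ) :=
  ⋂₀ {Z : Set (List Λ) | Y ⊆ Z ∧ IsUpperWordSet Z ∧ StableAll Z}

namespace HigmanAux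
open List

set_option linter.unusedSectionVars false

variable {Λ : Type*} [PartialOrder Λ]

theorem hle_nil (l : List Λ) : HigmanLE [] l := List.SublistForall₂.nil

theorem hle_of_sublist {l₁ l₂ : List Λ} (h : l₁ <+ l₂) : HigmanLE l₁ l₂ :=
  h.sublistForall₂

theorem hle_trans {a b c : List Λ} (h1 : HigmanLE a b) (h2 : HigmanLE b c) : HigmanLE a c :=
  IsTrans.trans (r := List.SublistForall₂ (· ≤ · : Λ → Λ → Prop)) a b c h1 h2

theorem hle_append_left {c d : List Λ} (h : HigmanLE c d) (l : List Λ) :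
    HigmanLE c (l ++ d) := by
  induction l with
  | nil => exact h
  | cons a l ih => exact List.SublistForall₂.cons_right ih

theorem hle_append {a b c d : List Λ} (h1 : HigmanLE a b) (h2 : HigmanLE c d) :
    HigmanLE (a ++ c) (b ++ d) := by
  induction h1 with
  | nil => exact hle_append_left h2 _
  | cons hab _ ih => exact List.SublistForall₂.cons hab ih
  | cons_right _ ih => exact List.SublistForall₂.cons_right ih

/-- split the smaller word along an append of the larger word -/
theorem hle_split_right {w x y : List Λ} (h : HigmanLE w (x ++ y)) :
    ∃ w₁ w₂, w = w₁ ++ w₂ ∧ HigmanLE w₁ x ∧ HigmanLE w₂ y := by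
  induction x generalizing w with
  | nil => exact ⟨[], w, rfl, hle_nil _, h⟩
  | cons a x ih =>
    cases h with
    | nil => exact ⟨[], [], rfl, hle_nil _, hle_nil _⟩
    | cons hab hs =>
      obtain ⟨w₁, w₂, rfl, h1, h2⟩ := ih hs
      exact ⟨_ :: w₁, w₂, rfl, List.SublistForall₂.cons hab h1, h2⟩
    | cons_right hs =>
      obtain ⟨w₁, w₂, rfl, h1, h2⟩ := ih hs
      exact ⟨w₁, w₂, rfl, List.SublistForall₂.cons_right h1, h2⟩

/-- split the larger word along an append of the smaller word -/
theorem hle_split_left_aux {l z : List Λ} (h : HigmanLE l z) :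
    ∀ u v : List Λ, l = u ++ v → ∃ z₁ z₂, z = z₁ ++ z₂ ∧ HigmanLE u z₁ ∧ HigmanLE v z₂ := by
  induction h with
  | nil =>
    rintro u v huv
    obtain ⟨rfl, rfl⟩ := List.append_eq_nil_iff.mp huv.symm
    exact ⟨[], _, rfl, hle_nil _, hle_nil _⟩
  | cons hab hs ih =>
    rintro u v huv
    cases u with
    | nil =>
      simp only [List.nil_append] at huv ⊢
      exact ⟨[], _, rfl, hle_nil _, huv ▸ List.SublistForall₂.cons hab hs⟩
    | cons b u =>
      rw [List.cons_append] at huv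
      injection huv with h1' h2'
      subst h1'
      obtain ⟨z₁, z₂, rfl, h1, h2⟩ := ih u v h2'
      exact ⟨_ :: z₁, z₂, rfl, List.SublistForall₂.cons hab h1, h2⟩
  | cons_right hs ih =>
    rintro u v huv
    obtain ⟨z₁, z₂, rfl, h1, h2⟩ := ih u v huv
    exact ⟨_ :: z₁, z₂, rfl, List.SublistForall₂.cons_right h1, h2⟩

theorem hle_split_left {u v z : List Λ} (h : HigmanLE (u ++ v) z) :
    ∃ z₁ z₂, z = z₁ ++ z₂ ∧ HigmanLE u z₁ ∧ HigmanLE v z₂ :=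
  hle_split_left_aux h u v rfl

theorem take_sublist_take {j k : ℕ} (h : j ≤ k) (z : List Λ) :
    z.take j <+ z.take k := by
  have : z.take j = (z.take k).take j := by rw [List.take_take, Nat.min_eq_left h]
  rw [this]; exact List.take_sublist _ _

theorem drop_sublist_drop {j k : ℕ} (h : j ≤ k) (z : List Λ) :
    z.drop k <+ z.drop j := by
  have : z.drop k = (z.drop j).drop (k - j) := by
    rw [List.drop_drop, Nat.add_sub_cancel' h]
  rw [this]; exact List.drop_sublist _ _


theorem lower_concat (A B : Set (List Λ)) :
    lowerCone (concatSet A B) = concatSet (lowerCone A) (lowerCone B) := by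
  ext w
  constructor
  · intro hw
    by_cases hB : B.Nonempty
    · set f : List Λ → ℕ := fun y => sInf {k | HigmanLE (w.drop k) y} with hf
      have hne : ∀ y : List Λ, {k | HigmanLE (w.drop k) y}.Nonempty := fun y =>
        ⟨w.length, by simp only [Set.mem_setOf_eq, List.drop_length]; exact hle_nil y⟩
      have hfmem : ∀ y, HigmanLE (w.drop (f y)) y := fun y => Nat.sInf_mem (hne y)
      have hbdd : BddAbove (f '' B) := by
        refine ⟨w.length, ?_⟩
        rintro _ ⟨y, hy, rfl⟩
        exact Nat.sInf_le (by simp only [Set.mem_setOf_eq, List.drop_length]; exact hle_nil y)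
      set k := sSup (f '' B) with hk
      obtain ⟨y₀, hy₀, hky⟩ := Nat.sSup_mem (hB.image f) hbdd
      refine ⟨w.take k, ?_, w.drop k, ?_, (List.take_append_drop k w).symm⟩
      · intro x hx
        obtain ⟨w₁, w₂, hw12, h1, h2⟩ := hle_split_right (hw (x ++ y₀) ⟨x, hx, y₀, hy₀, rfl⟩)
        have hle1 : f y₀ ≤ w₁.length := by
          refine Nat.sInf_le ?_
          show HigmanLE (w.drop w₁.length) y₀
          rw [hw12, List.drop_left]; exact h2
        have h3 : w.take k <+ w.take w₁.length := by
          rw [hk, ← hky]; exact take_sublist_take hle1 w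
        have h4 : HigmanLE (w.take w₁.length) x := by
          rw [hw12, List.take_left]; exact h1
        exact hle_trans (hle_of_sublist h3) h4
      · intro y hy
        have hfk : f y ≤ k := le_csSup hbdd ⟨y, hy, rfl⟩
        exact hle_trans (hle_of_sublist (drop_sublist_drop hfk w)) (hfmem y)
    · exact ⟨[], fun x _ => hle_nil x, w, fun y hy => absurd ⟨y, hy⟩ hB, rfl⟩
  · rintro ⟨w₁, h1, w₂, h2, rfl⟩ u ⟨x, hx, y, hy, rfl⟩
    exact hle_append (h1 x hx) (h2 y hy)

theorem upper_concat (A B : Set (List Λ)) (hA : A.Nonempty) (hB : B.Nonempty) :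
    upperCone (concatSet A B) = concatSet (upperCone A) (upperCone B) := by
  ext z
  constructor
  · intro hz
    obtain ⟨y₀, hy₀⟩ := hB
    set g : List Λ → ℕ := fun x => sInf {k | HigmanLE x (z.take k)} with hg
    have hlez : ∀ x ∈ A, HigmanLE x z := fun x hx =>
      hle_trans (hle_of_sublist (List.sublist_append_left x y₀)) (hz (x ++ y₀) ⟨x, hx, y₀, hy₀, rfl⟩)
    have hne : ∀ x ∈ A, {k | HigmanLE x (z.take k)}.Nonempty := fun x hx =>
      ⟨z.length, by simp only [Set.mem_setOf_eq, List.take_length]; exact hlez x hx⟩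
    have hbdd : BddAbove (g '' A) := by
      refine ⟨z.length, ?_⟩
      rintro _ ⟨x, hx, rfl⟩
      exact Nat.sInf_le (by simp only [Set.mem_setOf_eq, List.take_length]; exact hlez x hx)
    set k := sSup (g '' A) with hk
    obtain ⟨x₁, hx₁, hkx⟩ := Nat.sSup_mem (hA.image g) hbdd
    refine ⟨z.take k, ?_, z.drop k, ?_, (List.take_append_drop k z).symm⟩
    · intro x hx
      have h1 : HigmanLE x (z.take (g x)) := Nat.sInf_mem (hne x hx)
      have h2 : g x ≤ k := le_csSup hbdd ⟨x, hx, rfl⟩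
      exact hle_trans h1 (hle_of_sublist (take_sublist_take h2 z))
    · intro y hy
      obtain ⟨z₁, z₂, hz12, h1, h2⟩ := hle_split_left (hz (x₁ ++ y) ⟨x₁, hx₁, y, hy, rfl⟩)
      have hle1 : g x₁ ≤ z₁.length := by
        refine Nat.sInf_le ?_
        show HigmanLE x₁ (z.take z₁.length)
        rw [hz12, List.take_left]; exact h1
      have hsub : z.drop z₁.length <+ z.drop k := by
        rw [hk, ← hkx]; exact drop_sublist_drop hle1 z
      have h2' : HigmanLE y (z.drop z₁.length) := by
        rw [hz12, List.drop_left]; exact h2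
      exact hle_trans h2' (hle_of_sublist hsub)
  · rintro ⟨z₁, h1, z₂, h2, rfl⟩ u ⟨x, hx, y, hy, rfl⟩
    exact hle_append (h1 x hx) (h2 y hy)

theorem lowerCone_nonempty (A : Set (List Λ)) : (lowerCone A).Nonempty :=
  ⟨[], fun x _ => hle_nil x⟩

end HigmanAux

/-- `(XY)^{∇Δ} = X^{∇Δ} Y^{∇Δ}` and `(XY)^{Δ∇} = X^{Δ∇} Y^{Δ∇}`
for all nonempty subsets `X, Y` of `Λ*`. -/
theorem closure_concat {Λ : Type*} [PartialOrder Λ] (X Y : Set (List Λ))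
    (hX : X.Nonempty) (hY : Y.Nonempty) :
    upperCone (lowerCone (concatSet X Y)) =
      concatSet (upperCone (lowerCone X)) (upperCone (lowerCone Y)) ∧
    lowerCone (upperCone (concatSet X Y)) =
      concatSet (lowerCone (upperCone X)) (lowerCone (upperCone Y)) := by
  constructor
  · rw [HigmanAux.lower_concat X Y,
      HigmanAux.upper_concat _ _ (HigmanAux.lowerCone_nonempty X) (HigmanAux.lowerCone_nonempty Y)]
  · rw [HigmanAux.upper_concat X Y hX hY, HigmanAux.lower_concat]
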